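/- Let Λ be a countably infinite set, let S and R be finite commutative monoids, and let T be a finite submonoid of ℂ under multiplication. Assume S is T-dual to R with duality function ψ : S × R → T. Then the family of functions (x ↦ Ψ(x,y))_{y∈R^Λ_fin} from S^Λ to ℂ is distribution determining: any two Borel probability measures μ, μ' on S^Λ (with the product topology and Borel σ-algebra) satisfying ∫ Ψ(x,y) dμ(x) = ∫ Ψ(x,y) dμ'(x) for all y ∈ R^Λ_fin are equal. -/

import Mathlib

open Function MeasureTheory
open scoped Pointwise

/-- `f` is a monoid homomorphism (as a bare function). -/
def IsMonoidHomFun {M N : Type*} [MulOneClass M] [MulOneClass N] (f : M → N) : Prop :=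
  (∀ a b, f (a * b) = f a * f b) ∧ f 1 = 1

lemma real_pow_eq_one {x : ℝ} {n : ℕ} (hx : 0 ≤ x) (hn : 0 < n) (h : x ^ n = 1) : x = 1 := by
  rcases lt_trichotomy x 1 with hlt | heq | hgt
  · have := pow_lt_one₀ hx hlt (by omega : n ≠ 0)
    rw [h] at this; exact absurd this (lt_irrefl 1)
  · exact heq
  · have := one_lt_pow₀ hgt (by omega : n ≠ 0)
    rw [h] at this; exact absurd this (lt_irrefl 1)

/-- In a finite submonoid of ℂ, every element is 0 or a root of unity. -/
lemma T_zero_or_root (T : Submonoid ℂ) (hT : (T : Set ℂ).Finite) (t : T) :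
    (t : ℂ) = 0 ∨ ∃ n : ℕ, 0 < n ∧ (t : ℂ) ^ n = 1 := by
  haveI : Finite T := hT.to_subtype
  obtain ⟨k, l, hkl, hpow⟩ := Finite.exists_ne_map_eq_of_infinite (fun n : ℕ => t ^ n)
  rcases eq_or_ne (t : ℂ) 0 with h0 | h0
  · exact Or.inl h0
  · right
    wlog hlt : k < l generalizing k l
    · exact this l k hkl.symm hpow.symm (by omega)
    have hc : (t : ℂ) ^ k = (t : ℂ) ^ l := by
      simpa using congrArg (fun x : T => (x : ℂ)) hpow
    refine ⟨l - k, by omega, ?_⟩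
    have : (t : ℂ) ^ k * (t : ℂ) ^ (l - k) = (t : ℂ) ^ k * 1 := by
      rw [mul_one, ← pow_add]
      rw [hc]; congr 1; omega
    exact mul_left_cancel₀ (pow_ne_zero _ h0) this

/-- Elements of a finite submonoid of ℂ have norm at most 1. -/
lemma T_norm_le_one (T : Submonoid ℂ) (hT : (T : Set ℂ).Finite) (t : T) :
    ‖(t : ℂ)‖ ≤ 1 := by
  rcases T_zero_or_root T hT t with h0 | ⟨n, hn, hr⟩
  · simp [h0]
  · have h1 : ‖(t : ℂ)‖ ^ n = 1 := by rw [← norm_pow, hr, norm_one]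
    exact le_of_eq (real_pow_eq_one (norm_nonneg _) hn h1)

/-- A finite submonoid of ℂ is closed under complex conjugation. -/
lemma T_conj_mem (T : Submonoid ℂ) (hT : (T : Set ℂ).Finite) (t : T) :
    (starRingEnd ℂ) (t : ℂ) ∈ T := by
  rcases T_zero_or_root T hT t with h0 | ⟨n, hn, hr⟩
  · rw [h0, map_zero]; rw [← h0]; exact t.2
  · have hnorm : ‖(t : ℂ)‖ = 1 := by
      have h1 : ‖(t : ℂ)‖ ^ n = 1 := by rw [← norm_pow, hr, norm_one]
      exact real_pow_eq_one (norm_nonneg _) hn h1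
    have hconj : (starRingEnd ℂ) (t : ℂ) * (t : ℂ) = 1 := by
      rw [mul_comm, Complex.mul_conj]
      rw [Complex.normSq_eq_norm_sq, hnorm]
      norm_num
    have hmul : (t : ℂ) ^ (n - 1) * (t : ℂ) = 1 := by
      rw [← pow_succ]
      convert hr using 2; omega
    have key : (starRingEnd ℂ) (t : ℂ) = (t : ℂ) ^ (n - 1) := by
      calc (starRingEnd ℂ) (t : ℂ) = (starRingEnd ℂ) (t : ℂ) * ((t:ℂ) ^ (n-1) * (t:ℂ)) := by
            rw [hmul, mul_one]
        _ = ((starRingEnd ℂ) (t : ℂ) * (t:ℂ)) * (t:ℂ) ^ (n-1) := by ring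
        _ = (t : ℂ) ^ (n - 1) := by rw [hconj, one_mul]
    rw [key]
    exact pow_mem t.2 _

/-- Every delta function on `S` is a linear combination of the characters `ψ · y`. -/
lemma delta_rep {S R : Type*} [CommMonoid S] [CommMonoid R] [Fintype S] [Fintype R]
    [DecidableEq S] (T : Submonoid ℂ) (hT : (T : Set ℂ).Finite) (ψ : S → R → T)
    (hψ1 : ∀ x₁ x₂ : S, (∀ y : R, ψ x₁ y = ψ x₂ y) → x₁ = x₂)
    (hψ2 : ∀ f : S → T, IsMonoidHomFun f ↔ ∃ y : R, f = fun x => ψ x y)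
    (s : S) :
    ∃ d : R → ℂ, ∀ x : S, (if x = s then (1:ℂ) else 0) = ∑ y : R, d y * (ψ x y : ℂ) := by
  set v : R → (S → ℂ) := fun y x => (ψ x y : ℂ) with hv
  set A : Submodule ℂ (S → ℂ) := Submodule.span ℂ (Set.range v) with hA
  -- each ψ(·,y) is a monoid hom
  have hhom : ∀ y : R, IsMonoidHomFun (fun x => ψ x y) := fun y => (hψ2 _).mpr ⟨y, rfl⟩
  -- 1 ∈ range v
  have hone : ∃ y₀ : R, (fun _ : S => (1 : ℂ)) = v y₀ := by
    obtain ⟨y₀, hy₀⟩ := (hψ2 (fun _ => (1 : T))).mp ⟨fun _ _ => (mul_one 1).symm, rfl⟩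
    exact ⟨y₀, by funext x; simpa [hv] using congrArg (fun f => ((f x : T) : ℂ)) hy₀⟩
  have honeA : (1 : S → ℂ) ∈ A := by
    obtain ⟨y₀, hy₀⟩ := hone
    have : (1 : S → ℂ) = v y₀ := by funext x; exact congrFun hy₀ x
    rw [this]; exact Submodule.subset_span ⟨y₀, rfl⟩
  -- mult closure of range v
  have hmulv : ∀ y₁ y₂ : R, ∃ y₃ : R, v y₁ * v y₂ = v y₃ := by
    intro y₁ y₂
    have hf : IsMonoidHomFun (fun x => ψ x y₁ * ψ x y₂) := by
      constructor
      · intro a b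
        have h1 := (hhom y₁).1 a b
        have h2 := (hhom y₂).1 a b
        apply Subtype.ext
        push_cast [h1, h2]
        ring
      · apply Subtype.ext
        have e1 : ψ (1:S) y₁ = 1 := (hhom y₁).2
        have e2 : ψ (1:S) y₂ = 1 := (hhom y₂).2
        show ((ψ 1 y₁ * ψ 1 y₂ : T) : ℂ) = ((1:T) : ℂ)
        rw [e1, e2, mul_one]
    obtain ⟨y₃, hy₃⟩ := (hψ2 _).mp hf
    refine ⟨y₃, ?_⟩
    funext x
    have := congrArg (fun f => ((f x : T) : ℂ)) hy₃
    simpa [hv] using this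
  have hAmul : ∀ a ∈ A, ∀ b ∈ A, a * b ∈ A := by
    intro a ha b hb
    have hsub : Set.range v * Set.range v ⊆ Set.range v := by
      rintro z ⟨p, ⟨y₁, rfl⟩, q, ⟨y₂, rfl⟩, rfl⟩
      obtain ⟨y₃, hy₃⟩ := hmulv y₁ y₂
      exact ⟨y₃, hy₃.symm⟩
    have : a * b ∈ A * A := Submodule.mul_mem_mul ha hb
    rw [hA, Submodule.span_mul_span] at this
    exact Submodule.span_le.mpr (hsub.trans Submodule.subset_span) this
  -- conjugation closure
  have hconjv : ∀ y : R, ∃ y' : R, ∀ x : S, (ψ x y' : ℂ) = (starRingEnd ℂ) (ψ x y : ℂ) := by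
    intro y
    have hf : IsMonoidHomFun (fun x : S => (⟨(starRingEnd ℂ) (ψ x y : ℂ), T_conj_mem T hT _⟩ : T)) := by
      constructor
      · intro a b
        apply Subtype.ext
        have h1 := congrArg (fun t : T => (t : ℂ)) ((hhom y).1 a b)
        push_cast at h1 ⊢
        rw [h1, map_mul]
      · apply Subtype.ext
        have h1 := congrArg (fun t : T => (t : ℂ)) (hhom y).2
        push_cast at h1 ⊢
        rw [h1, map_one]
    obtain ⟨y', hy'⟩ := (hψ2 _).mp hf
    refine ⟨y', fun x => ?_⟩
    have := congrArg (fun f => ((f x : T) : ℂ)) hy'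
    simp at this
    exact this.symm
  -- choose separating characters
  have hsep : ∀ t : S, ∃ y : R, t ≠ s → ψ t y ≠ ψ s y := by
    intro t
    by_cases ht : t = s
    · exact ⟨1, fun h => absurd ht h⟩
    · have : ¬ ∀ y, ψ t y = ψ s y := fun hc => ht (hψ1 t s hc)
      push_neg at this
      obtain ⟨y, hy⟩ := this
      exact ⟨y, fun _ => hy⟩
  choose yc hyc using hsep
  choose ycj hycj using hconjv
  -- the functions g t
  set g : S → (S → ℂ) := fun t =>
    (v (ycj (yc t)) - (starRingEnd ℂ) ((ψ t (yc t) : ℂ)) • 1) * (v (yc t) - ((ψ t (yc t) : ℂ)) • 1)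
    with hg
  have hgA : ∀ t, g t ∈ A := by
    intro t
    apply hAmul
    · exact Submodule.sub_mem _ (Submodule.subset_span ⟨_, rfl⟩) (Submodule.smul_mem _ _ honeA)
    · exact Submodule.sub_mem _ (Submodule.subset_span ⟨_, rfl⟩) (Submodule.smul_mem _ _ honeA)
  have hgval : ∀ t x, g t x =
      (starRingEnd ℂ) ((ψ x (yc t) : ℂ) - (ψ t (yc t) : ℂ)) * ((ψ x (yc t) : ℂ) - (ψ t (yc t) : ℂ)) := by
    intro t x
    simp [hg, hv, Pi.mul_apply, Pi.sub_apply, Pi.smul_apply, hycj (yc t) x, map_sub]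
  have hgzero : ∀ t, g t t = 0 := by
    intro t; rw [hgval]; simp
  have hgs : ∀ t, t ≠ s → g t s ≠ 0 := by
    intro t ht
    rw [hgval]
    have hne : (ψ s (yc t) : ℂ) - (ψ t (yc t) : ℂ) ≠ 0 := by
      rw [sub_ne_zero]
      exact fun hc => hyc t ht (Subtype.ext hc.symm)
    exact mul_ne_zero ((map_ne_zero _).mpr hne) hne
  -- the product function
  set hfun : S → ℂ := ∏ t ∈ Finset.univ.erase s, g t with hhfun
  have hfunA : hfun ∈ A := by
    apply Finset.prod_induction _ (· ∈ A) (fun a b ha hb => hAmul a ha b hb) honeA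
    intro t _; exact hgA t
  have hfun_apply : ∀ x, hfun x = ∏ t ∈ Finset.univ.erase s, g t x := by
    intro x; rw [hhfun]; exact Finset.prod_apply x _ _
  have hfs : hfun s ≠ 0 := by
    rw [hfun_apply, Finset.prod_ne_zero_iff]
    intro t ht
    exact hgs t (Finset.ne_of_mem_erase ht)
  have hfu : ∀ u, u ≠ s → hfun u = 0 := by
    intro u hu
    rw [hfun_apply]
    exact Finset.prod_eq_zero (Finset.mem_erase.mpr ⟨hu, Finset.mem_univ u⟩) (hgzero u)
  -- delta
  have hdeltaA : (hfun s)⁻¹ • hfun ∈ A := Submodule.smul_mem _ _ hfunA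
  rw [hA, Submodule.mem_span_range_iff_exists_fun] at hdeltaA
  obtain ⟨c, hc⟩ := hdeltaA
  refine ⟨c, fun x => ?_⟩
  have hx := congrFun hc x
  simp only [Finset.sum_apply, Pi.smul_apply, smul_eq_mul] at hx
  rw [hx]
  by_cases hxs : x = s
  · subst hxs
    rw [if_pos rfl, inv_mul_cancel₀ hfs]
  · rw [if_neg hxs, hfu x hxs, mul_zero]

set_option maxHeartbeats 1000000 in
/-- **Informativeness of `Ψ` for complex-valued `T`.** Let `S`, `R` be finite commutative
monoids and `T` a finite submonoid of `(ℂ, ·)`, with `S` being `T`-dual to `R` via `ψ`.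
Then the family `(x ↦ Ψ(x,y))_{y ∈ R^Λ_fin}`, where `Ψ(x,y) = ∏ᶠ i, ψ (x i) (y i) ∈ ℂ`, is
distribution determining: two Borel probability measures on `S^Λ` (product topology) giving
every `Ψ(·,y)` the same integral are equal. -/
theorem psi_informative_of_complex_valued
    {Λ S R : Type*} [Countable Λ] [Infinite Λ]
    [CommMonoid S] [CommMonoid R] [Finite S] [Finite R]
    [TopologicalSpace S] [DiscreteTopology S]
    [MeasurableSpace (Λ → S)] [BorelSpace (Λ → S)]
    (T : Submonoid ℂ) (hT : (T : Set ℂ).Finite)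
    (ψ : S → R → T)
    (hψ1 : ∀ x₁ x₂ : S, (∀ y : R, ψ x₁ y = ψ x₂ y) → x₁ = x₂)
    (hψ2 : ∀ f : S → T, IsMonoidHomFun f ↔ ∃ y : R, f = fun x => ψ x y)
    (hψ3 : ∀ y₁ y₂ : R, (∀ x : S, ψ x y₁ = ψ x y₂) → y₁ = y₂)
    (hψ4 : ∀ g : R → T, IsMonoidHomFun g ↔ ∃ x : S, g = fun y => ψ x y)
    (μ μ' : Measure (Λ → S))
    (hμ : IsProbabilityMeasure μ) (hμ' : IsProbabilityMeasure μ')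
    (h : ∀ y : Λ → R, (Function.mulSupport y).Finite →
      ∫ x, (∏ᶠ i, (ψ (x i) (y i) : ℂ)) ∂μ = ∫ x, (∏ᶠ i, (ψ (x i) (y i) : ℂ)) ∂μ') :
    μ = μ' := by
  classical
  haveI : Fintype S := Fintype.ofFinite S
  haveI : Fintype R := Fintype.ofFinite R
  letI mS : MeasurableSpace S := ⊤
  haveI : BorelSpace S := ⟨borel_eq_top_of_discrete.symm⟩
  have hm : ‹MeasurableSpace (Λ → S)› = MeasurableSpace.pi := by
    have h2 : (MeasurableSpace.pi : MeasurableSpace (Λ → S)) = borel (Λ → S) :=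
      @BorelSpace.measurable_eq (Λ → S) _ MeasurableSpace.pi Pi.borelSpace
    exact (‹BorelSpace (Λ → S)›.measurable_eq).trans h2.symm
  subst hm
  -- ψ x · sends 1 to 1
  have hψR1 : ∀ x : S, ψ x (1 : R) = 1 := fun x => ((hψ4 (fun y => ψ x y)).mpr ⟨x, rfl⟩).2
  -- the key integral identity for arbitrary finite-dimensional test functions
  have key : ∀ (F : Finset Λ) (g : ((i : F) → S) → ℂ),
      ∫ x, g (fun i : F => x i) ∂μ = ∫ x, g (fun i : F => x i) ∂μ' := by
    intro F g
    choose d hd using fun s : S => delta_rep T hT ψ hψ1 hψ2 s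
    set ext : ((i : F) → R) → (Λ → R) := fun Y i => if hi : i ∈ F then Y ⟨i, hi⟩ else 1 with hext
    have hext_supp : ∀ Y, (mulSupport (ext Y)).Finite := by
      intro Y
      apply Set.Finite.subset F.finite_toSet
      intro i hi
      by_contra hiF
      exact hi (dif_neg hiF)
    set Φ : ((i : F) → R) → (Λ → S) → ℂ := fun Y x => ∏ᶠ i, (ψ (x i) (ext Y i) : ℂ) with hΦ
    have hΦ_eq : ∀ Y x, Φ Y x = ∏ i : F, (ψ (x ↑i) (Y i) : ℂ) := by
      intro Y x
      have hsub : mulSupport (fun i => (ψ (x i) (ext Y i) : ℂ)) ⊆ (F : Set Λ) := by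
        intro i hi
        by_contra hiF
        apply hi
        have h1 : ext Y i = 1 := dif_neg hiF
        show (ψ (x i) (ext Y i) : ℂ) = 1
        rw [h1, hψR1 (x i)]
        exact OneMemClass.coe_one T
      show (∏ᶠ i : Λ, (ψ (x i) (ext Y i) : ℂ)) = _
      rw [finprod_eq_prod_of_mulSupport_subset _ hsub, ← Finset.prod_coe_sort]
      apply Finset.prod_congr rfl
      intro i _
      have : ext Y ↑i = Y i := dif_pos i.2
      rw [this]
    set c : ((i : F) → S) × ((i : F) → R) → ℂ :=
      fun p => g p.1 * ∏ i : F, d (p.1 i) (p.2 i) with hc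
    -- pointwise expansion
    have hpoint : ∀ x : Λ → S,
        g (fun i : F => x ↑i) = ∑ p : ((i : F) → S) × ((i : F) → R), c p * Φ p.2 x := by
      intro x
      have step1 : ∀ a : (i : F) → S, (if (fun i : F => x ↑i) = a then (1:ℂ) else 0)
          = ∑ Y : (i : F) → R, (∏ i : F, d (a i) (Y i)) * Φ Y x := by
        intro a
        have e1 : (if (fun i : F => x ↑i) = a then (1:ℂ) else 0)
            = ∏ i : F, (if x ↑i = a i then (1:ℂ) else 0) := by
          by_cases hxa : (fun i : F => x ↑i) = a
          · rw [if_pos hxa, Finset.prod_eq_one]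
            intro i _
            rw [if_pos (congrFun hxa i)]
          · rw [if_neg hxa]
            have hex : ∃ i : F, x ↑i ≠ a i := by
              by_contra hforall
              push_neg at hforall
              exact hxa (funext hforall)
            obtain ⟨i, hi⟩ := hex
            exact (Finset.prod_eq_zero (Finset.mem_univ i)
              (if_neg hi : (if x ↑i = a i then (1:ℂ) else 0) = 0)).symm
        rw [e1]
        calc ∏ i : F, (if x ↑i = a i then (1:ℂ) else 0)
            = ∏ i : F, ∑ y : R, d (a i) y * (ψ (x ↑i) y : ℂ) :=
              Finset.prod_congr rfl (fun i _ => hd (a i) (x ↑i))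
          _ = ∑ Y ∈ Fintype.piFinset (fun _ : F => Finset.univ),
                ∏ i : F, d (a i) (Y i) * (ψ (x ↑i) (Y i) : ℂ) := Finset.prod_univ_sum _ _
          _ = ∑ Y : (i : F) → R, (∏ i : F, d (a i) (Y i)) * Φ Y x := by
              rw [Fintype.piFinset_univ]
              apply Finset.sum_congr rfl
              intro Y _
              rw [Finset.prod_mul_distrib, hΦ_eq Y x]
      calc g (fun i : F => x ↑i)
          = ∑ a : (i : F) → S, g a * (if (fun i : F => x ↑i) = a then (1:ℂ) else 0) := by
            rw [Finset.sum_congr rfl (fun a _ => by rw [mul_ite, mul_one, mul_zero])]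
            rw [Finset.sum_ite_eq Finset.univ (fun i : F => x ↑i) g]
            rw [if_pos (Finset.mem_univ _)]
        _ = ∑ a : (i : F) → S, ∑ Y : (i : F) → R,
              (g a * ∏ i : F, d (a i) (Y i)) * Φ Y x := by
            apply Finset.sum_congr rfl
            intro a _
            rw [step1 a, Finset.mul_sum]
            apply Finset.sum_congr rfl
            intro Y _
            ring
        _ = ∑ p : ((i : F) → S) × ((i : F) → R), c p * Φ p.2 x := by
            rw [Fintype.sum_prod_type]
    -- integrability
    have hmeas : ∀ Y, Measurable (Φ Y) := by
      intro Y
      have hfe : Φ Y = fun x => ∏ i : F, (ψ (x ↑i) (Y i) : ℂ) := funext (hΦ_eq Y)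
      rw [hfe]
      apply Finset.measurable_prod
      intro i _
      exact (measurable_from_top (f := fun s : S => (ψ s (Y i) : ℂ))).comp
        (measurable_pi_apply (i : Λ))
    have hbound : ∀ Y x, ‖Φ Y x‖ ≤ 1 := by
      intro Y x
      rw [hΦ_eq]
      refine (Finset.norm_prod_le _ _).trans ?_
      exact Finset.prod_le_one (fun i _ => norm_nonneg _) (fun i _ => T_norm_le_one T hT _)
    have hint : ∀ (ν : Measure (Λ → S)) [IsProbabilityMeasure ν], ∀ Y, Integrable (Φ Y) ν := by
      intro ν _ Y
      exact ⟨(hmeas Y).aestronglyMeasurable,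
        HasFiniteIntegral.of_bounded (C := 1) (Filter.Eventually.of_forall (hbound Y))⟩
    have hsplit : ∀ (ν : Measure (Λ → S)) [IsProbabilityMeasure ν],
        ∫ x, g (fun i : F => x ↑i) ∂ν = ∑ p : ((i : F) → S) × ((i : F) → R),
          c p * ∫ x, Φ p.2 x ∂ν := by
      intro ν _
      have hfe : (fun x : Λ → S => g (fun i : F => x ↑i))
          = fun x => ∑ p : ((i : F) → S) × ((i : F) → R), c p * Φ p.2 x := funext hpoint
      rw [hfe, integral_finset_sum]
      · exact Finset.sum_congr rfl fun p _ => integral_const_mul _ _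
      · intro p _
        exact (hint ν p.2).const_mul _
    rw [hsplit μ, hsplit μ']
    apply Finset.sum_congr rfl
    intro p _
    rw [h (ext p.2) (hext_supp p.2)]
  -- measures agree on cylinders
  have hcyl : ∀ s ∈ measurableCylinders (fun _ : Λ => S), μ s = μ' s := by
    intro s hs
    obtain ⟨F, A, hA, rfl⟩ := (mem_measurableCylinders s).mp hs
    have hAm : MeasurableSet (cylinder F A) :=
      measurable_pi_lambda (fun (f : Λ → S) (i : F) => f ↑i) (fun _ => measurable_pi_apply _) hA
    have hg := key F (fun z => if z ∈ A then (1:ℂ) else 0)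
    have hind : (fun x : Λ → S => if (fun i : F => x ↑i) ∈ A then (1:ℂ) else 0)
        = (cylinder F A).indicator (fun _ => (1:ℂ)) := by
      funext x
      rw [Set.indicator_apply]
      by_cases hx : (fun i : F => x ↑i) ∈ A
      · rw [if_pos hx, if_pos ((mem_cylinder F A x).mpr hx)]
      · rw [if_neg hx, if_neg (fun hc => hx ((mem_cylinder F A x).mp hc))]
    rw [hind] at hg
    rw [integral_indicator_const (1:ℂ) hAm, integral_indicator_const (1:ℂ) hAm] at hg
    have htr : (μ (cylinder F A)).toReal = (μ' (cylinder F A)).toReal := by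
      have := hg
      simp only [smul_eq_mul, Complex.real_smul, mul_one] at this
      exact_mod_cast this
    exact (ENNReal.toReal_eq_toReal_iff' (measure_ne_top μ _) (measure_ne_top μ' _)).mp htr
  refine MeasureTheory.ext_of_generate_finite (measurableCylinders (fun _ : Λ => S))
    generateFrom_measurableCylinders.symm isPiSystem_measurableCylinders hcyl ?_
  simp [hμ.measure_univ, hμ'.measure_univ]
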